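/- Consider the quiver Q_1 on 3 vertices forming an oriented 3-cycle in both directions (each pair of adjacent vertices has one arrow each way around the triangle, i.e. arrows v₁→v₂, v₂→v₃, v₃→v₁ and v₁→v₃, v₃→v₂, v₂→v₁). The number of primitive oriented cycles (oriented cycles that cannot be decomposed as a concatenation of shorter oriented cycles at their vertices) in Q_1 is 5. -/

import Mathlib

/-- An edge of a quiver with arrow-count function `a : V → V → ℕ` is a triple
`(s, t, k)` with `k < a s t`. A list of such triples is an oriented cycle if it
is nonempty, every entry is a genuine arrow, consecutive arrows are composable,
and the last arrow ends where the first one starts. -/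
def IsOrientedCycle {V : Type*} (a : V → V → ℕ) (l : List (V × V × ℕ)) : Prop :=
  l ≠ [] ∧ (∀ e ∈ l, e.2.2 < a e.1 e.2.1) ∧
    l.Chain' (fun e f => e.2.1 = f.1) ∧
    l.getLast?.map (fun e => e.2.1) = l.head?.map (fun e => e.1)

/-- An oriented cycle is primitive if no cyclic rotation of it decomposes as the
concatenation of two nontrivial oriented cycles. -/
def IsPrimitiveCycle {V : Type*} (a : V → V → ℕ) (l : List (V × V × ℕ)) : Prop :=
  IsOrientedCycle a l ∧
    ¬ ∃ (k : ℕ) (l₁ l₂ : List (V × V × ℕ)),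
        IsOrientedCycle a l₁ ∧ IsOrientedCycle a l₂ ∧ l.rotate k = l₁ ++ l₂

/-- Cyclic-rotation relation on primitive cycles: the number of primitive
oriented cycles of the quiver is the number of classes of this relation. -/
def CycleRot {V : Type*} (a : V → V → ℕ)
    (l l' : {l : List (V × V × ℕ) // IsPrimitiveCycle a l}) : Prop :=
  ∃ k, l.1.rotate k = l'.1

namespace PrimCyc

/-- The specific arrow-count function. -/
def A : Fin 3 → Fin 3 → ℕ := fun i j => if i = j then 0 else 1

variable {V : Type*} {a : V → V → ℕ}

/-- Index characterization of oriented cycles. -/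
lemma cyc_iff {l : List (V × V × ℕ)} (hne : l ≠ []) :
    IsOrientedCycle a l ↔ (∀ e ∈ l, e.2.2 < a e.1 e.2.1) ∧
      ∀ i : ℕ, ∀ h : i < l.length,
        (l[i]'h).2.1 = (l[(i+1) % l.length]'(Nat.mod_lt _ (by omega))).1 := by
  have h0 : 0 < l.length := List.length_pos_iff.mpr hne
  constructor
  · rintro ⟨-, ha, hc, hw⟩
    refine ⟨ha, fun i h => ?_⟩
    rcases Nat.lt_or_ge (i+1) l.length with h' | h'
    · have hthis := List.isChain_iff_getElem.mp hc i (by omega)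
      have hmod : (i+1) % l.length = i+1 := Nat.mod_eq_of_lt h'
      simp_rw [hmod]
      exact hthis
    · have hi : i = l.length - 1 := by omega
      have hmod : (i+1) % l.length = 0 := by
        have hh : i + 1 = l.length := by omega
        simp [hh]
      rw [List.getLast?_eq_getElem?, List.head?_eq_getElem?,
        List.getElem?_eq_getElem (show l.length - 1 < l.length by omega),
        List.getElem?_eq_getElem h0] at hw
      simp only [Option.map_some, Option.some.injEq] at hw
      subst hi
      simp_rw [hmod]
      exact hw
  · rintro ⟨ha, hstep⟩
    refine ⟨hne, ha, ?_, ?_⟩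
    · apply List.isChain_iff_getElem.mpr
      intro i h
      have hthis := hstep i (by omega)
      have hmod : (i+1) % l.length = i+1 := Nat.mod_eq_of_lt (by omega)
      simp_rw [hmod] at hthis
      simpa using hthis
    · have hthis := hstep (l.length - 1) (by omega)
      have hmod : (l.length - 1 + 1) % l.length = 0 := by
        have hh : l.length - 1 + 1 = l.length := by omega
        simp [hh]
      simp_rw [hmod] at hthis
      rw [List.getLast?_eq_getElem?, List.head?_eq_getElem?,
        List.getElem?_eq_getElem (show l.length - 1 < l.length by omega),
        List.getElem?_eq_getElem h0]
      simp [hthis]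

lemma cyc_rotate {l : List (V × V × ℕ)} (hl : IsOrientedCycle a l) (k : ℕ) :
    IsOrientedCycle a (l.rotate k) := by
  have hne := hl.1
  have h0 : 0 < l.length := List.length_pos_iff.mpr hne
  rw [cyc_iff hne] at hl
  obtain ⟨ha, hstep⟩ := hl
  have hne' : l.rotate k ≠ [] := by
    rw [← List.length_pos_iff, List.length_rotate]; exact h0
  rw [cyc_iff hne']
  refine ⟨fun e he => ha e (List.mem_rotate.mp he), fun i h => ?_⟩
  rw [List.getElem_rotate, List.getElem_rotate]
  simp only [List.length_rotate]
  have hidx : ((i+1) % l.length + k) % l.length = ((i+k) % l.length + 1) % l.length := by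
    rw [Nat.mod_add_mod, Nat.mod_add_mod, Nat.add_right_comm]
  simp_rw [hidx]
  exact hstep ((i + k) % l.length) (Nat.mod_lt _ h0)

lemma cyc_split {l : List (V × V × ℕ)} (hl : IsOrientedCycle a l) {m : ℕ}
    (h1 : 0 < m) (h2 : m < l.length)
    (heq : (l[m]'h2).1 = (l[0]'(by omega)).1) :
    IsOrientedCycle a (l.take m) ∧ IsOrientedCycle a (l.drop m) := by
  have hne := hl.1
  have h0 : 0 < l.length := by omega
  rw [cyc_iff hne] at hl
  obtain ⟨ha, hstep⟩ := hl
  have hlt : (l.take m).length = m := by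
    simp [Nat.min_eq_left (le_of_lt h2)]
  have hld : (l.drop m).length = l.length - m := by simp
  have hnet : l.take m ≠ [] := by rw [← List.length_pos_iff, hlt]; omega
  have hned : l.drop m ≠ [] := by rw [← List.length_pos_iff, hld]; omega
  constructor
  · rw [cyc_iff hnet]
    refine ⟨fun e he => ha e (List.mem_of_mem_take he), fun i h => ?_⟩
    rw [List.getElem_take, List.getElem_take]
    simp_rw [hlt] at h ⊢
    rcases Nat.lt_or_ge (i+1) m with h' | h'
    · have hmod : (i+1) % m = i+1 := Nat.mod_eq_of_lt h'
      simp_rw [hmod]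
      have hthis := hstep i (by omega)
      have hmod2 : (i+1) % l.length = i+1 := Nat.mod_eq_of_lt (by omega)
      simp_rw [hmod2] at hthis
      exact hthis
    · have hi : i + 1 = m := by omega
      have hmod : (i+1) % m = 0 := by simp [hi]
      simp_rw [hmod]
      have hthis := hstep i (by omega)
      have hmod2 : (i+1) % l.length = m := by rw [hi]; exact Nat.mod_eq_of_lt h2
      simp_rw [hmod2] at hthis
      rw [hthis]
      exact heq
  · rw [cyc_iff hned]
    refine ⟨fun e he => ha e (List.mem_of_mem_drop he), fun i h => ?_⟩
    rw [List.getElem_drop, List.getElem_drop]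
    simp_rw [hld] at h ⊢
    rcases Nat.lt_or_ge (i+1) (l.length - m) with h' | h'
    · have hmod : (i+1) % (l.length - m) = i+1 := Nat.mod_eq_of_lt h'
      simp_rw [hmod]
      have hthis := hstep (m + i) (by omega)
      have hmod2 : (m + i + 1) % l.length = m + (i+1) := by
        rw [Nat.mod_eq_of_lt (by omega)]; omega
      simp_rw [hmod2] at hthis
      exact hthis
    · have hi : i + 1 = l.length - m := by omega
      have hmod : (i+1) % (l.length - m) = 0 := by simp [hi]
      simp_rw [hmod]
      have hthis := hstep (m + i) (by omega)
      have hmod2 : (m + i + 1) % l.length = 0 := by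
        have hh : m + i + 1 = l.length := by omega
        simp [hh]
      simp_rw [hmod2] at hthis
      rw [hthis]
      exact heq.symm

/-- Oriented cycles for `A` have length at least 2. -/
lemma two_le_length {l : List (Fin 3 × Fin 3 × ℕ)} (hl : IsOrientedCycle A l) :
    2 ≤ l.length := by
  have hne := hl.1
  have h0 : 0 < l.length := List.length_pos_iff.mpr hne
  by_contra h
  have h1 : l.length = 1 := by omega
  rw [cyc_iff hne] at hl
  obtain ⟨ha, hstep⟩ := hl
  have hthis := hstep 0 (by omega)
  have hmod : (0+1) % l.length = 0 := by simp [h1]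
  simp_rw [hmod] at hthis
  have harr := ha (l[0]'h0) (List.getElem_mem h0)
  rw [hthis] at harr
  simp [A] at harr

/-- Cycles of length at most 3 are primitive. -/
lemma prim_of_small {l : List (Fin 3 × Fin 3 × ℕ)} (hl : IsOrientedCycle A l)
    (h3 : l.length ≤ 3) : IsPrimitiveCycle A l := by
  refine ⟨hl, ?_⟩
  rintro ⟨k, l₁, l₂, h1, h2, he⟩
  have e1 := two_le_length h1
  have e2 := two_le_length h2
  have : (l.rotate k).length = l.length := List.length_rotate l k
  rw [he, List.length_append] at this
  omega

/-- Any cycle of length ≥ 4 decomposes after a rotation. -/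
lemma decomp_of_big {l : List (Fin 3 × Fin 3 × ℕ)} (hl : IsOrientedCycle A l)
    (h4 : 4 ≤ l.length) :
    ∃ (k : ℕ) (l₁ l₂ : List (Fin 3 × Fin 3 × ℕ)),
      IsOrientedCycle A l₁ ∧ IsOrientedCycle A l₂ ∧ l.rotate k = l₁ ++ l₂ := by
  have hne := hl.1
  have hstep := ((cyc_iff hne).mp hl).2
  have ha := ((cyc_iff hne).mp hl).1
  -- consecutive sources are distinct
  have hs : ∀ i : ℕ, ∀ h : i + 1 < l.length,
      (l[i]'(by omega)).1 ≠ (l[i+1]'h).1 := by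
    intro i h
    have hthis := hstep i (by omega)
    have hmod : (i+1) % l.length = i+1 := Nat.mod_eq_of_lt h
    simp_rw [hmod] at hthis
    rw [← hthis]
    have harr := ha (l[i]'(by omega)) (List.getElem_mem (by omega))
    intro hc
    rw [hc] at harr
    simp [A] at harr
  have htri : ∀ x y z w : Fin 3, x ≠ y → y ≠ z → z ≠ w →
      x = z ∨ y = w ∨ x = w := by decide
  have h01 := hs 0 (by omega)
  have h12 := hs 1 (by omega)
  have h23 := hs 2 (by omega)
  rcases htri _ _ _ _ h01 h12 h23 with hc | hc | hc
  · -- l[0].1 = l[2].1 : split l at 2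
    have := cyc_split hl (show 0 < 2 by omega) (show 2 < l.length by omega) hc.symm
    exact ⟨0, l.take 2, l.drop 2, this.1, this.2,
      by rw [List.rotate_zero]; exact (List.take_append_drop 2 l).symm⟩
  · -- l[1].1 = l[3].1 : rotate by 1, split at 2
    have hr := cyc_rotate hl 1
    have hlen : (l.rotate 1).length = l.length := List.length_rotate l 1
    have heq : ((l.rotate 1)[2]'(by omega)).1 = ((l.rotate 1)[0]'(by omega)).1 := by
      rw [List.getElem_rotate, List.getElem_rotate]
      have e1 : (2 + 1) % l.length = 3 := Nat.mod_eq_of_lt (by omega)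
      have e2 : (0 + 1) % l.length = 1 := Nat.mod_eq_of_lt (by omega)
      simp_rw [e1, e2]
      exact hc.symm
    have := cyc_split hr (show 0 < 2 by omega) (show 2 < (l.rotate 1).length by omega) heq
    exact ⟨1, (l.rotate 1).take 2, (l.rotate 1).drop 2, this.1, this.2,
      (List.take_append_drop 2 (l.rotate 1)).symm⟩
  · -- l[0].1 = l[3].1 : split at 3
    have := cyc_split hl (show 0 < 3 by omega) (show 3 < l.length by omega) hc.symm
    exact ⟨0, l.take 3, l.drop 3, this.1, this.2,
      by rw [List.rotate_zero]; exact (List.take_append_drop 3 l).symm⟩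

/-- Primitive cycles have length 2 or 3. -/
lemma prim_len {l : List (Fin 3 × Fin 3 × ℕ)} (hl : IsPrimitiveCycle A l) :
    l.length = 2 ∨ l.length = 3 := by
  have h2 := two_le_length hl.1
  by_contra h
  push_neg at h
  exact hl.2 (decomp_of_big hl.1 (by omega))

/-- The twelve primitive cycle lists. -/
def L12 : List (List (Fin 3 × Fin 3 × ℕ)) :=
  [ [(0,1,0),(1,0,0)], [(1,0,0),(0,1,0)],
    [(0,2,0),(2,0,0)], [(2,0,0),(0,2,0)],
    [(1,2,0),(2,1,0)], [(2,1,0),(1,2,0)],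
    [(0,1,0),(1,2,0),(2,0,0)], [(1,2,0),(2,0,0),(0,1,0)], [(2,0,0),(0,1,0),(1,2,0)],
    [(0,2,0),(2,1,0),(1,0,0)], [(2,1,0),(1,0,0),(0,2,0)], [(1,0,0),(0,2,0),(2,1,0)] ]

lemma arrow_eq {e : Fin 3 × Fin 3 × ℕ} (h : e.2.2 < A e.1 e.2.1) :
    e.1 ≠ e.2.1 ∧ e.2.2 = 0 := by
  by_cases hc : e.1 = e.2.1
  · simp [A, hc] at h
  · simp [A, hc] at h
    omega

lemma prim_mem {l : List (Fin 3 × Fin 3 × ℕ)} (hl : IsPrimitiveCycle A l) :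
    l ∈ L12 := by
  rcases prim_len hl with h | h
  · obtain ⟨e, f, rfl⟩ := List.length_eq_two.mp h
    obtain ⟨-, ha, hc, hw⟩ := hl.1
    obtain ⟨i, j, x⟩ := e
    obtain ⟨i', j', x'⟩ := f
    have a1 := arrow_eq (ha (i,j,x) (by simp))
    have a2 := arrow_eq (ha (i',j',x') (by simp))
    simp only [ne_eq] at a1 a2
    obtain ⟨hij, rfl⟩ := a1
    obtain ⟨hij', rfl⟩ := a2
    simp [List.Chain', List.isChain_cons_cons] at hc
    simp at hw
    clear hl ha h
    revert hc hw hij hij'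
    revert i j i' j'
    decide
  · obtain ⟨e, f, g, rfl⟩ := List.length_eq_three.mp h
    obtain ⟨-, ha, hc, hw⟩ := hl.1
    obtain ⟨i, j, x⟩ := e
    obtain ⟨i', j', x'⟩ := f
    obtain ⟨i'', j'', x''⟩ := g
    have a1 := arrow_eq (ha (i,j,x) (by simp))
    have a2 := arrow_eq (ha (i',j',x') (by simp))
    have a3 := arrow_eq (ha (i'',j'',x'') (by simp))
    simp only [ne_eq] at a1 a2 a3
    obtain ⟨hij, rfl⟩ := a1
    obtain ⟨hij', rfl⟩ := a2
    obtain ⟨hij'', rfl⟩ := a3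
    simp [List.Chain', List.isChain_cons_cons] at hc
    simp at hw
    obtain ⟨hc1, hc2⟩ := hc
    clear hl ha h
    revert hc1 hc2 hw hij hij' hij''
    revert i j i' j' i'' j''
    decide

/-- Class representatives. -/
def reps : Fin 5 → List (Fin 3 × Fin 3 × ℕ) :=
  ![ [(0,1,0),(1,0,0)], [(0,2,0),(2,0,0)], [(1,2,0),(2,1,0)],
     [(0,1,0),(1,2,0),(2,0,0)], [(0,2,0),(2,1,0),(1,0,0)] ]

lemma cyc_reps (i : Fin 5) : IsOrientedCycle A (reps i) := by
  fin_cases i <;>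
    exact ⟨by decide, by decide, by simp [List.Chain', List.isChain_cons_cons, PrimCyc.reps], by decide⟩

lemma prim_reps (i : Fin 5) : IsPrimitiveCycle A (reps i) := by
  refine prim_of_small (cyc_reps i) ?_
  fin_cases i <;> decide

/-- Class function. -/
def F (l : List (Fin 3 × Fin 3 × ℕ)) : Fin 5 :=
  if l = [(0,1,0),(1,0,0)] ∨ l = [(1,0,0),(0,1,0)] then 0
  else if l = [(0,2,0),(2,0,0)] ∨ l = [(2,0,0),(0,2,0)] then 1
  else if l = [(1,2,0),(2,1,0)] ∨ l = [(2,1,0),(1,2,0)] then 2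
  else if l = [(0,1,0),(1,2,0),(2,0,0)] ∨ l = [(1,2,0),(2,0,0),(0,1,0)] ∨
          l = [(2,0,0),(0,1,0),(1,2,0)] then 3
  else 4

set_option maxRecDepth 4000 in
lemma mem_L12_cases {l : List (Fin 3 × Fin 3 × ℕ)} (h : l ∈ L12) :
    ∃ k : ℕ, (reps (F l)).rotate k = l := by
  fin_cases h
  · exact ⟨0, by decide⟩
  · exact ⟨1, by decide⟩
  · exact ⟨0, by decide⟩
  · exact ⟨1, by decide⟩
  · exact ⟨0, by decide⟩
  · exact ⟨1, by decide⟩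
  · exact ⟨0, by decide⟩
  · exact ⟨1, by decide⟩
  · exact ⟨2, by decide⟩
  · exact ⟨0, by decide⟩
  · exact ⟨1, by decide⟩
  · exact ⟨2, by decide⟩

lemma rot_cases2 {α : Type*} (l : List α) (hl : l.length = 2) (k : ℕ) :
    l.rotate k = l ∨ l.rotate k = l.rotate 1 := by
  have h := (List.rotate_mod l k).symm
  rw [hl] at h
  have : k % 2 = 0 ∨ k % 2 = 1 := by omega
  rcases this with h2 | h2 <;> rw [h, h2] <;> simp

lemma rot_cases3 {α : Type*} (l : List α) (hl : l.length = 3) (k : ℕ) :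
    l.rotate k = l ∨ l.rotate k = l.rotate 1 ∨ l.rotate k = l.rotate 2 := by
  have h := (List.rotate_mod l k).symm
  rw [hl] at h
  have : k % 3 = 0 ∨ k % 3 = 1 ∨ k % 3 = 2 := by omega
  rcases this with h2 | h2 | h2 <;> rw [h, h2] <;> simp

lemma F_rot2 {l : List (Fin 3 × Fin 3 × ℕ)} (hl : l.length = 2)
    (h1 : F (l.rotate 1) = F l) (k : ℕ) : F (l.rotate k) = F l := by
  rcases rot_cases2 l hl k with h | h <;> rw [h]
  exact h1

lemma F_rot3 {l : List (Fin 3 × Fin 3 × ℕ)} (hl : l.length = 3)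
    (h1 : F (l.rotate 1) = F l) (h2 : F (l.rotate 2) = F l) (k : ℕ) :
    F (l.rotate k) = F l := by
  rcases rot_cases3 l hl k with h | h | h <;> rw [h]
  · exact h1
  · exact h2

set_option maxRecDepth 4000 in
lemma F_rot {l : List (Fin 3 × Fin 3 × ℕ)} (h : l ∈ L12) (k : ℕ) :
    F (l.rotate k) = F l := by
  fin_cases h <;>
    first
    | exact F_rot2 (by decide) (by decide) k
    | exact F_rot3 (by decide) (by decide) (by decide) k

set_option maxRecDepth 4000 in
lemma F_reps (i : Fin 5) : F (reps i) = i := by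
  fin_cases i <;> decide

/-- The quiver of type `4_{3a}` (three vertices, one arrow each way between
every pair of distinct vertices, i.e. both oriented triangles) has exactly 5
primitive oriented cycles. -/
theorem primitive_cycles_type4_3a' :
    Nat.card (Quot (CycleRot A)) = 5 := by
  refine Nat.card_eq_of_equiv_fin ?_
  refine
    { toFun := Quot.lift (fun l => F l.1) ?_
      invFun := fun i => Quot.mk _ ⟨reps i, prim_reps i⟩
      left_inv := ?_
      right_inv := ?_ }
  · rintro x y ⟨k, hk⟩
    rw [← hk]
    exact (F_rot (prim_mem x.2) k).symm
  · intro q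
    induction q using Quot.ind with
    | _ x => exact Quot.sound (mem_L12_cases (prim_mem x.2))
  · intro i
    exact F_reps i

end PrimCyc

/-- The quiver of type `4_{3a}` (three vertices, one arrow each way between
every pair of distinct vertices, i.e. both oriented triangles) has exactly 5
primitive oriented cycles. -/
theorem primitive_cycles_type4_3a :
    let a : Fin 3 → Fin 3 → ℕ := fun i j => if i = j then 0 else 1
    Nat.card (Quot (CycleRot a)) = 5 := by
  intro a
  exact PrimCyc.primitive_cycles_type4_3a'
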